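/- Étale cover sign count for a multiplicity-2 elliptic fiber: the weighted signed count of connected degree-d unbranched covers of a torus, where a cover corresponding to an index-d subgroup Λ ⊂ ℤ² gets sign +1 or −1 according to whether a fixed nonzero homomorphism ε : ℤ² → ℤ/2 vanishes on Λ or not (with weight 1/d), equals (1/d)[σ(d) − 2σ(d/2)], where σ(d/2) := 0 if d is odd. -/

import Mathlib

open AddSubgroup


/-- The injection `(x,y) ↦ (x, b y)`. -/
noncomputable def jmap (b : ℕ) : (ℤ × ℤ) →+ (ℤ × ℤ) :=
  AddMonoidHom.mk' (fun p => (p.1, (b : ℤ) * p.2)) (by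
    intro p q; simp [Prod.ext_iff]; ring)

/-- The map `(x,y) ↦ x - t y mod a`. -/
noncomputable def rho (a : ℕ) (t : ZMod a) : (ℤ × ℤ) →+ ZMod a :=
  AddMonoidHom.mk' (fun p => (p.1 : ZMod a) - t * (p.2 : ZMod a)) (by
    intro p q; simp only [Prod.fst_add, Prod.snd_add, Int.cast_add]; ring)

/-- Standard-form finite index subgroup of `ℤ²`. -/
noncomputable def Lgrp (a b : ℕ) (t : ZMod a) : AddSubgroup (ℤ × ℤ) :=
  (rho a t).ker.map (jmap b)

lemma mem_Lgrp {a b : ℕ} {t : ZMod a} {x y : ℤ} :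
    (x, y) ∈ Lgrp a b t ↔ ∃ v : ℤ, y = (b : ℤ) * v ∧ (x : ZMod a) = t * (v : ZMod a) := by
  constructor
  · rintro ⟨⟨u, v⟩, hker, heq⟩
    simp only [jmap, AddMonoidHom.mk'_apply, Prod.mk.injEq] at heq
    refine ⟨v, heq.2.symm, ?_⟩
    have : (u : ZMod a) - t * (v : ZMod a) = 0 := hker
    rw [← heq.1]
    linear_combination this
  · rintro ⟨v, hy, hx⟩
    refine ⟨(x, v), ?_, ?_⟩
    · show (x : ZMod a) - t * (v : ZMod a) = 0
      rw [hx]; ring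
    · simp [jmap, hy]

lemma rho_surjective (a : ℕ) (t : ZMod a) : Function.Surjective (rho a t) := by
  intro z
  obtain ⟨x, hx⟩ := ZMod.intCast_surjective (n := a) z
  exact ⟨(x, 0), by simp [rho, hx]⟩

lemma jmap_injective {b : ℕ} (hb : b ≠ 0) : Function.Injective (jmap b) := by
  intro p q h
  simp only [jmap, AddMonoidHom.mk'_apply, Prod.mk.injEq] at h
  have : (b : ℤ) ≠ 0 := by exact_mod_cast hb
  exact Prod.ext h.1 (mul_left_cancel₀ this h.2)

lemma jmap_range (b : ℕ) {x y : ℤ} : (x, y) ∈ (jmap b).range ↔ (b : ℤ) ∣ y := by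
  constructor
  · rintro ⟨⟨u, v⟩, h⟩
    simp only [jmap, AddMonoidHom.mk'_apply, Prod.mk.injEq] at h
    exact ⟨v, h.2.symm⟩
  · rintro ⟨v, hv⟩
    exact ⟨(x, v), by simp [jmap, hv]⟩

lemma jmap_range_index (b : ℕ) : (jmap b).range.index = b := by
  have hpi : ∀ z : ZMod b, ∃ p : ℤ × ℤ, ((p.2 : ZMod b)) = z := by
    intro z; obtain ⟨y, hy⟩ := ZMod.intCast_surjective (n := b) z
    exact ⟨(0, y), hy⟩
  let pi : (ℤ × ℤ) →+ ZMod b :=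
    AddMonoidHom.mk' (fun p => (p.2 : ZMod b)) (by intro p q; simp only [Prod.snd_add, Int.cast_add])
  have hker : (jmap b).range = pi.ker := by
    ext ⟨x, y⟩
    rw [jmap_range]
    show (b:ℤ) ∣ y ↔ (y : ZMod b) = 0
    exact (ZMod.intCast_zmod_eq_zero_iff_dvd y b).symm
  rw [hker, AddSubgroup.index_ker,
    AddMonoidHom.range_eq_top_of_surjective _ (fun z => hpi z), ]
  rw [AddSubgroup.card_top, Nat.card_zmod]

lemma index_Lgrp (a b : ℕ) (t : ZMod a) (hb : b ≠ 0) : (Lgrp a b t).index = a * b := by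
  rw [Lgrp, AddSubgroup.index_map_of_injective _ (jmap_injective hb),
    AddSubgroup.index_ker, AddMonoidHom.range_eq_top_of_surjective _ (rho_surjective a t),
    jmap_range_index]
  rw [AddSubgroup.card_top, Nat.card_zmod]

-- helper: cyclic description of a subgroup of ℤ
lemma int_subgroup (B : AddSubgroup ℤ) :
    ∃ b : ℕ, B.index = b ∧ ∀ x : ℤ, x ∈ B ↔ (b : ℤ) ∣ x := by
  obtain ⟨g, hg⟩ := Int.subgroup_cyclic B
  have hz : B = AddSubgroup.zmultiples g := by
    rw [hg]
    ext x
    rw [AddSubgroup.mem_closure_singleton, AddSubgroup.mem_zmultiples_iff]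
  refine ⟨g.natAbs, ?_, ?_⟩
  · rw [hz, Int.index_zmultiples]
  · intro x
    rw [hz, Int.mem_zmultiples_iff, ← Int.natAbs_dvd]

lemma subgroup_eq_Lgrp (H : AddSubgroup (ℤ × ℤ)) (hH : H.index ≠ 0) :
    ∃ (a b : ℕ) (t : ZMod a), a ≠ 0 ∧ b ≠ 0 ∧ H = Lgrp a b t := by
  -- the quotient is finite
  have hfin : Finite ((ℤ × ℤ) ⧸ H) := (Nat.card_ne_zero.mp hH).2
  -- second-coordinate image
  obtain ⟨b, hBidx, hBmem⟩ := int_subgroup (H.map (AddMonoidHom.snd ℤ ℤ))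
  -- first-coordinate fiber
  obtain ⟨a, hAidx, hAmem⟩ := int_subgroup (H.comap (AddMonoidHom.inl ℤ ℤ))
  have hA : ∀ x : ℤ, (x, 0) ∈ H ↔ (a : ℤ) ∣ x := by
    intro x; rw [← hAmem x]; rfl
  have hb : b ≠ 0 := by
    rintro rfl
    apply hH
    have hle : H ≤ (H.map (AddMonoidHom.snd ℤ ℤ)).comap (AddMonoidHom.snd ℤ ℤ) :=
      fun p hp => AddSubgroup.mem_comap.mpr (AddSubgroup.mem_map_of_mem _ hp)
    have := AddSubgroup.index_dvd_of_le hle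
    rwa [AddSubgroup.index_comap_of_surjective _ Prod.snd_surjective, hBidx,
      Nat.zero_dvd] at this
  have ha : a ≠ 0 := by
    have hker : H.comap (AddMonoidHom.inl ℤ ℤ) =
        ((QuotientAddGroup.mk' H).comp (AddMonoidHom.inl ℤ ℤ)).ker := by
      ext x
      simp [AddMonoidHom.mem_ker, QuotientAddGroup.eq_zero_iff]
    rw [hker, AddSubgroup.index_ker] at hAidx
    rw [← hAidx]
    exact Nat.card_ne_zero.mpr ⟨⟨0, AddSubgroup.zero_mem _⟩, inferInstance⟩
  -- a witness over b
  have hbB : (b : ℤ) ∈ H.map (AddMonoidHom.snd ℤ ℤ) := (hBmem _).mpr dvd_rfl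
  obtain ⟨⟨x₀, y₀⟩, hx₀H, hx₀⟩ := hbB
  simp only [AddMonoidHom.coe_snd] at hx₀
  subst hx₀
  have hsm : ∀ (v : ℤ) (p : ℤ × ℤ), v • p = (v * p.1, v * p.2) := by
    intro v p; simp [Prod.ext_iff]
  refine ⟨a, b, (x₀ : ZMod a), ha, hb, ?_⟩
  ext ⟨x, y⟩
  rw [mem_Lgrp]
  constructor
  · intro hxy
    have hyB : y ∈ H.map (AddMonoidHom.snd ℤ ℤ) := ⟨(x, y), hxy, rfl⟩
    obtain ⟨v, hv⟩ := (hBmem y).mp hyB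
    refine ⟨v, hv, ?_⟩
    have hmem : (x - v * x₀, 0) ∈ H := by
      have h := H.sub_mem hxy (H.zsmul_mem hx₀H v)
      rw [hsm] at h
      have heq : ((x, y) - (v * (x₀, (b:ℤ)).1, v * (x₀, (b:ℤ)).2)) = (x - v * x₀, 0) := by
        simp only [Prod.mk_sub_mk, Prod.mk.injEq]
        exact ⟨by trivial, by rw [hv]; ring⟩
      rwa [heq] at h
    have := (hA _).mp hmem
    have hz : ((x - v * x₀ : ℤ) : ZMod a) = 0 :=
      (ZMod.intCast_zmod_eq_zero_iff_dvd _ a).mpr this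
    push_cast at hz
    linear_combination hz
  · rintro ⟨v, hy, hx⟩
    have hdvd : (a : ℤ) ∣ x - v * x₀ := by
      rw [← ZMod.intCast_zmod_eq_zero_iff_dvd]
      push_cast
      linear_combination hx
    have h1 : (x - v * x₀, 0) ∈ H := (hA _).mpr hdvd
    have h2 : (v * x₀, v * (b : ℤ)) ∈ H := by
      have := H.zsmul_mem hx₀H v; rwa [hsm] at this
    have h := H.add_mem h1 h2
    have heq : ((x - v * x₀, 0) + (v * x₀, v * (b:ℤ))) = (x, y) := by
      simp only [Prod.mk_add_mk, Prod.mk.injEq]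
      exact ⟨by ring, by rw [hy]; ring⟩
    rwa [heq] at h

lemma lift_mem_Lgrp (a b : ℕ) (t : ZMod a) [NeZero a] :
    (((t.val : ℤ)), (b : ℤ)) ∈ Lgrp a b t := by
  rw [mem_Lgrp]
  exact ⟨1, by ring, by push_cast [ZMod.natCast_val, ZMod.cast_id]; ring⟩

lemma card_index_subgroups (e : ℕ) (he : e ≠ 0) :
    Nat.card {H : AddSubgroup (ℤ × ℤ) // H.index = e} = ∑ k ∈ e.divisors, k := by
  classical
  have hprop : ∀ p : ℕ × ℕ, p ∈ e.divisorsAntidiagonal → p.1 ≠ 0 ∧ p.2 ≠ 0 := by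
    intro p hp
    rw [Nat.mem_divisorsAntidiagonal] at hp
    constructor
    · rintro h0; rw [h0, zero_mul] at hp; exact absurd hp.1.symm he
    · rintro h0; rw [h0, mul_zero] at hp; exact absurd hp.1.symm he
  let F : ((p : e.divisorsAntidiagonal) × ZMod p.1.1) →
      {H : AddSubgroup (ℤ × ℤ) // H.index = e} := fun q =>
    ⟨Lgrp q.1.1.1 q.1.1.2 q.2, by
      rw [index_Lgrp _ _ _ (hprop _ q.1.2).2]
      exact (Nat.mem_divisorsAntidiagonal.mp q.1.2).1⟩
  have hbij : Function.Bijective F := by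
    constructor
    · rintro ⟨⟨⟨a, b⟩, hp⟩, t⟩ ⟨⟨⟨a', b'⟩, hp'⟩, t'⟩ h
      obtain ⟨ha, hb⟩ := hprop _ hp
      obtain ⟨ha', hb'⟩ := hprop _ hp'
      haveI : NeZero a := ⟨ha⟩
      haveI : NeZero a' := ⟨ha'⟩
      have hLL : Lgrp a b t = Lgrp a' b' t' := congrArg Subtype.val h
      -- b = b'
      have hbb : b = b' := by
        have h1 := lift_mem_Lgrp a' b' t'
        rw [← hLL, mem_Lgrp] at h1
        obtain ⟨v, hv, -⟩ := h1
        have h2 := lift_mem_Lgrp a b t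
        rw [hLL, mem_Lgrp] at h2
        obtain ⟨w, hw, -⟩ := h2
        have d1 : (b : ℤ) ∣ (b' : ℤ) := ⟨v, hv⟩
        have d2 : (b' : ℤ) ∣ (b : ℤ) := ⟨w, hw⟩
        exact Nat.dvd_antisymm (Int.natCast_dvd_natCast.mp d1) (Int.natCast_dvd_natCast.mp d2)
      have haa : a = a' := by
        have h1 := (Nat.mem_divisorsAntidiagonal.mp hp).1
        have h2 := (Nat.mem_divisorsAntidiagonal.mp hp').1
        rw [← hbb] at h2
        rw [← h2] at h1
        exact Nat.eq_of_mul_eq_mul_right (Nat.pos_of_ne_zero hb) h1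
      subst haa hbb
      have htt : t = t' := by
        have h1 := lift_mem_Lgrp a b t'
        rw [← hLL, mem_Lgrp] at h1
        obtain ⟨v, hv, hx⟩ := h1
        have hv1 : v = 1 := by
          have hbz : (b : ℤ) ≠ 0 := by exact_mod_cast hb
          have hv' := mul_left_cancel₀ hbz (hv.symm.trans (mul_one _).symm)
          omega
        rw [hv1] at hx
        push_cast [ZMod.natCast_val, ZMod.cast_id] at hx
        rw [mul_one] at hx
        exact hx.symm
      subst htt
      rfl
    · rintro ⟨H, hHe⟩
      have hidx : H.index ≠ 0 := by rw [hHe]; exact he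
      obtain ⟨a, b, t, ha, hb, hH⟩ := subgroup_eq_Lgrp H hidx
      have hab : a * b = e := by rw [← hHe, hH, index_Lgrp _ _ _ hb]
      have hp : (a, b) ∈ e.divisorsAntidiagonal :=
        Nat.mem_divisorsAntidiagonal.mpr ⟨hab, he⟩
      exact ⟨⟨⟨(a, b), hp⟩, t⟩, Subtype.ext hH.symm⟩
  rw [← Nat.card_congr (Equiv.ofBijective F hbij)]
  haveI inst : ∀ p : e.divisorsAntidiagonal, NeZero ((p : ℕ × ℕ).1) :=
    fun p => ⟨(hprop _ p.2).1⟩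
  rw [Nat.card_eq_fintype_card, Fintype.card_sigma]
  have : ∀ p : e.divisorsAntidiagonal, Fintype.card (ZMod (p : ℕ × ℕ).1) = (p : ℕ × ℕ).1 :=
    fun p => ZMod.card _
  rw [Finset.sum_congr rfl (fun p _ => this p)]
  rw [Finset.sum_coe_sort e.divisorsAntidiagonal (fun p => p.1)]
  exact Nat.sum_divisorsAntidiagonal (fun a b => a)



lemma ker_index_two (ε : (ℤ × ℤ) →+ ZMod 2) (hε : Function.Surjective ε) :
    ε.ker.index = 2 := by
  rw [AddSubgroup.index_ker, AddMonoidHom.range_eq_top_of_surjective _ hε,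
    AddSubgroup.card_top, Nat.card_zmod]

lemma exists_inj_onto_ker (ε : (ℤ × ℤ) →+ ZMod 2) (hε : Function.Surjective ε) :
    ∃ m : (ℤ × ℤ) →+ (ℤ × ℤ), Function.Injective m ∧ m.range = ε.ker := by
  set α := ε (1, 0) with hα
  set β := ε (0, 1) with hβ
  have hval : ∀ x y : ℤ, ε (x, y) = (x : ZMod 2) * α + (y : ZMod 2) * β := by
    intro x y
    have hxy : ((x, y) : ℤ × ℤ) = x • ((1 : ℤ), (0 : ℤ)) + y • ((0 : ℤ), (1 : ℤ)) := by
      simp [Prod.ext_iff]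
    rw [hxy, map_add, map_zsmul, map_zsmul, ← hα, ← hβ, zsmul_eq_mul, zsmul_eq_mul]
  have h2 : ∀ z : ZMod 2, z = 0 ∨ z = 1 := by decide
  have hdvd : ∀ u : ℤ, ((u : ZMod 2) = 0) ↔ (2 : ℤ) ∣ u := by
    intro u
    have := ZMod.intCast_zmod_eq_zero_iff_dvd u 2
    simpa using this
  rcases h2 α with hα0 | hα1
  · rcases h2 β with hβ0 | hβ1
    · exfalso
      obtain ⟨⟨x, y⟩, hp⟩ := hε 1
      rw [hval, hα0, hβ0] at hp
      simp at hp
    · -- ε (x,y) = y mod 2 : m (x,y) = (x, 2y)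
      refine ⟨AddMonoidHom.mk' (fun p => (p.1, 2 * p.2)) (by intro p q; simp [Prod.ext_iff]; ring), ?_, ?_⟩
      · intro p q h
        simp only [AddMonoidHom.mk'_apply, Prod.mk.injEq] at h
        exact Prod.ext h.1 (by omega)
      · ext ⟨u, v⟩
        simp only [AddMonoidHom.mem_range, AddMonoidHom.mk'_apply, Prod.mk.injEq,
          AddMonoidHom.mem_ker, Prod.exists]
        rw [hval, hα0, hβ1]
        simp only [mul_zero, mul_one, zero_add]
        rw [hdvd]
        constructor
        · rintro ⟨x, y, rfl, rfl⟩; exact ⟨y, rfl⟩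
        · rintro ⟨y, hy⟩; exact ⟨u, y, rfl, hy.symm⟩
  · rcases h2 β with hβ0 | hβ1
    · -- ε (x,y) = x mod 2 : m (x,y) = (2x, y)
      refine ⟨AddMonoidHom.mk' (fun p => (2 * p.1, p.2)) (by intro p q; simp [Prod.ext_iff]; ring), ?_, ?_⟩
      · intro p q h
        simp only [AddMonoidHom.mk'_apply, Prod.mk.injEq] at h
        exact Prod.ext (by omega) h.2
      · ext ⟨u, v⟩
        simp only [AddMonoidHom.mem_range, AddMonoidHom.mk'_apply, Prod.mk.injEq,
          AddMonoidHom.mem_ker, Prod.exists]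
        rw [hval, hα1, hβ0]
        simp only [mul_zero, mul_one, add_zero]
        rw [hdvd]
        constructor
        · rintro ⟨x, y, rfl, rfl⟩; exact ⟨x, rfl⟩
        · rintro ⟨x, hx⟩; exact ⟨x, v, hx.symm, rfl⟩
    · -- ε (x,y) = x + y mod 2 : m (x,y) = (x, x + 2y)
      refine ⟨AddMonoidHom.mk' (fun p => (p.1, p.1 + 2 * p.2)) (by intro p q; simp [Prod.ext_iff]; ring), ?_, ?_⟩
      · intro p q h
        simp only [AddMonoidHom.mk'_apply, Prod.mk.injEq] at h
        exact Prod.ext h.1 (by omega)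
      · ext ⟨u, v⟩
        simp only [AddMonoidHom.mem_range, AddMonoidHom.mk'_apply, Prod.mk.injEq,
          AddMonoidHom.mem_ker, Prod.exists]
        rw [hval, hα1, hβ1]
        simp only [mul_one]
        have : ((u : ZMod 2) + (v : ZMod 2) = 0) ↔ (2 : ℤ) ∣ u + v := by
          rw [← Int.cast_add, hdvd]
        rw [this]
        constructor
        · rintro ⟨x, y, rfl, rfl⟩; exact ⟨x + y, by ring⟩
        · rintro ⟨y, hy⟩; exact ⟨u, y - u, rfl, by omega⟩

lemma card_contained_even (d : ℕ) (h2 : 2 ∣ d) (m : (ℤ × ℤ) →+ (ℤ × ℤ))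
    (hm : Function.Injective m) (K : AddSubgroup (ℤ × ℤ)) (hK : m.range = K)
    (hKi : K.index = 2) :
    Nat.card {H : AddSubgroup (ℤ × ℤ) // H.index = d ∧ H ≤ K}
      = Nat.card {H : AddSubgroup (ℤ × ℤ) // H.index = d / 2} := by
  apply Nat.card_congr
  refine ⟨fun q => ⟨q.1.comap m, ?_⟩, fun q => ⟨q.1.map m, ?_, ?_⟩, ?_, ?_⟩
  · obtain ⟨H, hHd, hHle⟩ := q
    have h1 : H.relIndex K * K.index = H.index := AddSubgroup.relIndex_mul_index hHle
    have h2' : (H.comap m).index = H.relIndex K := by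
      rw [AddSubgroup.index_comap, hK]
    rw [hKi, hHd] at h1
    rw [h2']
    omega
  · have h1 : (q.1.map m).index = q.1.index * m.range.index :=
      AddSubgroup.index_map_of_injective _ hm
    rw [hK, hKi, q.2] at h1
    rw [h1]
    omega
  · rw [← hK]
    exact AddSubgroup.map_le_range _ _
  · rintro ⟨H, hHd, hHle⟩
    apply Subtype.ext
    exact AddSubgroup.map_comap_eq_self (by rw [hK]; exact hHle)
  · rintro ⟨H, hHd⟩
    apply Subtype.ext
    exact AddSubgroup.comap_map_eq_self_of_injective hm H

lemma card_contained_odd (d : ℕ) (hodd : ¬ 2 ∣ d) (K : AddSubgroup (ℤ × ℤ))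
    (hKi : K.index = 2) :
    Nat.card {H : AddSubgroup (ℤ × ℤ) // H.index = d ∧ H ≤ K} = 0 := by
  have : IsEmpty {H : AddSubgroup (ℤ × ℤ) // H.index = d ∧ H ≤ K} := by
    refine ⟨fun q => hodd ?_⟩
    obtain ⟨H, hHd, hHle⟩ := q
    have := AddSubgroup.index_dvd_of_le hHle
    rwa [hKi, hHd] at this
  exact Nat.card_of_isEmpty

lemma card_split (d : ℕ) (hfin : Finite {H : AddSubgroup (ℤ × ℤ) // H.index = d})
    (K : AddSubgroup (ℤ × ℤ)) :
    Nat.card {H : AddSubgroup (ℤ × ℤ) // H.index = d ∧ H ≤ K}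
      + Nat.card {H : AddSubgroup (ℤ × ℤ) // H.index = d ∧ ¬ H ≤ K}
      = Nat.card {H : AddSubgroup (ℤ × ℤ) // H.index = d} := by
  classical
  have e1 : {H : AddSubgroup (ℤ × ℤ) // H.index = d ∧ H ≤ K}
      ≃ {x : {H : AddSubgroup (ℤ × ℤ) // H.index = d} // x.1 ≤ K} :=
    (Equiv.subtypeSubtypeEquivSubtypeInter _ _).symm
  have e2 : {H : AddSubgroup (ℤ × ℤ) // H.index = d ∧ ¬ H ≤ K}
      ≃ {x : {H : AddSubgroup (ℤ × ℤ) // H.index = d} // ¬ x.1 ≤ K} :=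
    (Equiv.subtypeSubtypeEquivSubtypeInter _ _).symm
  haveI f1 : Finite {H : AddSubgroup (ℤ × ℤ) // H.index = d ∧ H ≤ K} :=
    Finite.of_equiv _ (e1.trans (Equiv.refl _)).symm
  haveI f2 : Finite {H : AddSubgroup (ℤ × ℤ) // H.index = d ∧ ¬ H ≤ K} :=
    Finite.of_equiv _ e2.symm
  have e3 := (e1.sumCongr e2).trans (Equiv.sumCompl (fun x : {H : AddSubgroup (ℤ × ℤ) // H.index = d} => x.1 ≤ K))
  rw [← Nat.card_congr e3, Nat.card_sum]


/-- Signed étale-cover count for a multiplicity-2 elliptic fiber: among the index-`d`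
subgroups `Λ ≤ ℤ²` (degree-`d` connected covers of the torus), those contained in the
kernel of a fixed surjection `ε : ℤ² → ℤ/2` number `σ(d/2)` (zero if `d` is odd), and
the weighted signed count (`+1` if `Λ ⊄ ker ε`, `−1` if `Λ ⊆ ker ε`, each with weight
`1/d`) equals `(σ(d) − 2σ(d/2))/d`. -/
theorem signed_cover_count_multiple_fiber
    (d : ℕ) (hd : 0 < d) (ε : (ℤ × ℤ) →+ ZMod 2) (hε : Function.Surjective ε) :
    (Nat.card {H : AddSubgroup (ℤ × ℤ) // H.index = d ∧ H ≤ ε.ker}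
        = if 2 ∣ d then ∑ k ∈ (d / 2).divisors, k else 0) ∧
    ((Nat.card {H : AddSubgroup (ℤ × ℤ) // H.index = d ∧ ¬ H ≤ ε.ker} : ℚ)
        - Nat.card {H : AddSubgroup (ℤ × ℤ) // H.index = d ∧ H ≤ ε.ker}) / d
      = ((∑ k ∈ d.divisors, k : ℚ)
          - 2 * (if 2 ∣ d then ∑ k ∈ (d / 2).divisors, (k : ℚ) else 0)) / d := by
  obtain ⟨m, hm, hker⟩ := exists_inj_onto_ker ε hε
  have hKi : ε.ker.index = 2 := ker_index_two ε hε
  have htot : Nat.card {H : AddSubgroup (ℤ × ℤ) // H.index = d} = ∑ k ∈ d.divisors, k :=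
    card_index_subgroups d hd.ne'
  have htotpos : 0 < ∑ k ∈ d.divisors, k :=
    Finset.sum_pos (fun i hi => Nat.pos_of_mem_divisors hi)
      ⟨d, Nat.mem_divisors_self d hd.ne'⟩
  have hfin : Finite {H : AddSubgroup (ℤ × ℤ) // H.index = d} :=
    (Nat.card_ne_zero.mp (by rw [htot]; omega)).2
  have hcont : Nat.card {H : AddSubgroup (ℤ × ℤ) // H.index = d ∧ H ≤ ε.ker}
      = if 2 ∣ d then ∑ k ∈ (d / 2).divisors, k else 0 := by
    by_cases h2 : 2 ∣ d
    · rw [if_pos h2, card_contained_even d h2 m hm ε.ker hker hKi,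
        card_index_subgroups (d / 2) (by omega)]
    · rw [if_neg h2, card_contained_odd d h2 ε.ker hKi]
  refine ⟨hcont, ?_⟩
  have hsplit := card_split d hfin ε.ker
  rw [htot] at hsplit
  congr 1
  by_cases h2 : 2 ∣ d
  · rw [if_pos h2] at hcont ⊢
    have hnot : Nat.card {H : AddSubgroup (ℤ × ℤ) // H.index = d ∧ ¬ H ≤ ε.ker}
        = (∑ k ∈ d.divisors, k) - (∑ k ∈ (d / 2).divisors, k) := by omega
    rw [hcont, hnot]
    have hle : (∑ k ∈ (d / 2).divisors, k) ≤ ∑ k ∈ d.divisors, k := by omega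
    push_cast [Nat.cast_sub hle]
    ring
  · rw [if_neg h2] at hcont ⊢
    have hnot : Nat.card {H : AddSubgroup (ℤ × ℤ) // H.index = d ∧ ¬ H ≤ ε.ker}
        = ∑ k ∈ d.divisors, k := by omega
    rw [hcont, hnot]
    push_cast
    ring
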